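/- Let A be a Banach algebra and I a closed two-sided ideal of A such that the closed linear span of I² equals I. If the quotient Banach algebra A/I is approximately cyclic amenable and I is cyclic amenable, then A is approximately cyclic amenable. -/

import Mathlib

open Filter Topology

noncomputable section

universe u v

variable {A : Type u} [NonUnitalNormedRing A] [NormedSpace ℂ A]
  [IsScalarTower ℂ A A] [SMulCommClass ℂ A A]

/-- The left module action of `A` on its dual `A*`: `(a · f) b = f (b * a)`. -/
def lAct (a : A) (f : A →L[ℂ] ℂ) : A →L[ℂ] ℂ :=
  f.comp ((ContinuousLinearMap.mul ℂ A).flip a)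

/-- The right module action of `A` on its dual `A*`: `(f · a) b = f (a * b)`. -/
def rAct (f : A →L[ℂ] ℂ) (a : A) : A →L[ℂ] ℂ :=
  f.comp (ContinuousLinearMap.mul ℂ A a)

/-- A bounded linear `D : A → A*` is a derivation if `D (a * b) = D a · b + a · D b`. -/
def IsDerivation (D : A →L[ℂ] (A →L[ℂ] ℂ)) : Prop :=
  ∀ a b : A, D (a * b) = rAct (D a) b + lAct a (D b)

/-- A derivation `D : A → A*` is cyclic if `⟨D a, b⟩ + ⟨D b, a⟩ = 0` for all `a, b`. -/
def IsCyclicDeriv (D : A →L[ℂ] (A →L[ℂ] ℂ)) : Prop :=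
  ∀ a b : A, D a b + D b a = 0

/-- `D : A → A*` is approximately inner if there is a net `(f i)` in `A*` with
`D a = lim_i (a · f i - f i · a)` in norm, for every `a ∈ A`. -/
def IsApproxInner {A : Type u} [NonUnitalNormedRing A] [NormedSpace ℂ A]
    [IsScalarTower ℂ A A] [SMulCommClass ℂ A A] (D : A →L[ℂ] (A →L[ℂ] ℂ)) : Prop :=
  ∃ (ι : Type u) (l : Filter ι) (f : ι → (A →L[ℂ] ℂ)), l.NeBot ∧
    ∀ a : A, Tendsto (fun i => lAct a (f i) - rAct (f i) a) l (𝓝 (D a))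

/-- `D : A → A*` is inner if `D a = a · f - f · a` for some fixed `f ∈ A*`. -/
def IsInner (D : A →L[ℂ] (A →L[ℂ] ℂ)) : Prop :=
  ∃ f : A →L[ℂ] ℂ, ∀ a : A, D a = lAct a f - rAct f a

/-- A Banach algebra is approximately cyclic amenable if every cyclic bounded
derivation `D : A → A*` is approximately inner. -/
def ApproxCyclicAmenable (A : Type u) [NonUnitalNormedRing A] [NormedSpace ℂ A]
    [IsScalarTower ℂ A A] [SMulCommClass ℂ A A] : Prop :=
  ∀ D : A →L[ℂ] (A →L[ℂ] ℂ), IsDerivation D → IsCyclicDeriv D → IsApproxInner D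

/-- A Banach algebra is cyclic amenable if every cyclic bounded derivation
`D : A → A*` is inner. -/
def CyclicAmenable (A : Type u) [NonUnitalNormedRing A] [NormedSpace ℂ A]
    [IsScalarTower ℂ A A] [SMulCommClass ℂ A A] : Prop :=
  ∀ D : A →L[ℂ] (A →L[ℂ] ℂ), IsDerivation D → IsCyclicDeriv D → IsInner D

instance nonUnitalSubalgebraNormedSpaceComplex {B : Type u} [NonUnitalNormedRing B]
    [NormedSpace ℂ B] [IsScalarTower ℂ B B] [SMulCommClass ℂ B B]
    (S : NonUnitalSubalgebra ℂ B) : NormedSpace ℂ S :=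
  SubmoduleClass.toNormedSpace (R := ℂ) S


lemma lAct_apply {A : Type u} [NonUnitalNormedRing A] [NormedSpace ℂ A]
    [IsScalarTower ℂ A A] [SMulCommClass ℂ A A] (a : A) (f : A →L[ℂ] ℂ) (b : A) :
    lAct a f b = f (b * a) := rfl

lemma rAct_apply {A : Type u} [NonUnitalNormedRing A] [NormedSpace ℂ A]
    [IsScalarTower ℂ A A] [SMulCommClass ℂ A A] (f : A →L[ℂ] ℂ) (a b : A) :
    rAct f a b = f (a * b) := rfl

set_option maxHeartbeats 2000000 in
/-- Let `I` be a closed two-sided ideal of a Banach algebra `A` such that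
the closed linear span of `I² = {x * y : x, y ∈ I}` is `I`.  If the quotient Banach algebra
`A/I` is approximately cyclic amenable and `I` is cyclic amenable, then `A` is
approximately cyclic amenable.  (The quotient is represented by a Banach algebra `Q`
together with a surjective continuous multiplicative linear map `π : A → Q` with kernel `I`
and the quotient norm.) -/
theorem approxCyclicAmenable_of_quotient_and_ideal
    {A : Type u} {Q : Type v} [NonUnitalNormedRing A] [NormedSpace ℂ A]
    [IsScalarTower ℂ A A] [SMulCommClass ℂ A A] [CompleteSpace A]
    [NonUnitalNormedRing Q] [NormedSpace ℂ Q]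
    [IsScalarTower ℂ Q Q] [SMulCommClass ℂ Q Q] [CompleteSpace Q]
    (I : NonUnitalSubalgebra ℂ A) (hclosed : IsClosed (I : Set A))
    (hr : ∀ (a : A), ∀ x ∈ I, x * a ∈ I) (hl : ∀ (a : A), ∀ x ∈ I, a * x ∈ I)
    (hI2 : (Submodule.span ℂ {z : A | ∃ x ∈ I, ∃ y ∈ I, z = x * y}).topologicalClosure
      = I.toSubmodule)
    (π : A →L[ℂ] Q) (hmul : ∀ x y : A, π (x * y) = π x * π y)
    (hsurj : Function.Surjective π) (hker : ∀ a : A, π a = 0 ↔ a ∈ I)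
    (hnorm : ∀ q : Q, ‖q‖ = sInf (norm '' (π ⁻¹' {q})))
    (hQ : ApproxCyclicAmenable Q) (hI : CyclicAmenable ↥I) :
    ApproxCyclicAmenable A := by
  classical
  intro D hD hcyc
  -- the restriction of `D` to `I`, as a derivation `I → I*`
  set incl : ↥I →L[ℂ] A := I.toSubmodule.subtypeL with hincl_def
  set DI : ↥I →L[ℂ] (↥I →L[ℂ] ℂ) :=
    ((ContinuousLinearMap.compL ℂ (↥I) A ℂ).flip incl).comp (D.comp incl) with hDI_def
  have hDIapp : ∀ x y : ↥I, DI x y = D (x : A) (y : A) := fun x y => rfl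
  have hDIder : IsDerivation DI := by
    intro x y
    ext z
    have h1 := congrArg (fun φ : A →L[ℂ] ℂ => φ (z : A)) (hD (x : A) (y : A))
    simp only [ContinuousLinearMap.add_apply, lAct_apply, rAct_apply] at h1
    simp only [ContinuousLinearMap.add_apply, lAct_apply, rAct_apply, hDIapp,
      MulMemClass.coe_mul]
    exact h1
  have hDIcyc : IsCyclicDeriv DI := by
    intro x y
    simp only [hDIapp]
    exact hcyc (x : A) (y : A)
  obtain ⟨f, hf⟩ := hI DI hDIder hDIcyc
  -- extend `f` to `A` by Hahn-Banach
  obtain ⟨F, hF, -⟩ := exists_extension_norm_eq I.toSubmodule f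
  -- the inner derivation associated with `F`
  set adF : A →L[ℂ] (A →L[ℂ] ℂ) :=
    ((ContinuousLinearMap.compL ℂ A A ℂ F).comp (ContinuousLinearMap.mul ℂ A).flip)
      - ((ContinuousLinearMap.compL ℂ A A ℂ F).comp (ContinuousLinearMap.mul ℂ A))
    with hadF_def
  have hadF_apply : ∀ a b : A, adF a b = F (b * a) - F (a * b) := fun a b => rfl
  have hadF_der : IsDerivation adF := by
    intro a b
    ext c
    simp only [ContinuousLinearMap.add_apply, lAct_apply, rAct_apply, hadF_apply, mul_assoc]
    ring
  set D1 : A →L[ℂ] (A →L[ℂ] ℂ) := D - adF with hD1_def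
  have hD1app : ∀ a b : A, D1 a b = D a b - (F (b * a) - F (a * b)) := by
    intro a b
    simp only [hD1_def, ContinuousLinearMap.sub_apply, hadF_apply]
  have hD1der : IsDerivation D1 := by
    intro a b
    ext c
    have h1 := congrArg (fun φ : A →L[ℂ] ℂ => φ c) (hD a b)
    have h2 := congrArg (fun φ : A →L[ℂ] ℂ => φ c) (hadF_der a b)
    simp only [ContinuousLinearMap.add_apply, lAct_apply, rAct_apply] at h1 h2
    simp only [ContinuousLinearMap.add_apply, ContinuousLinearMap.sub_apply,
      lAct_apply, rAct_apply, hD1_def]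
    rw [h1, h2]
    ring
  have hD1cyc : IsCyclicDeriv D1 := by
    intro a b
    have h1 := hcyc a b
    simp only [hD1_def, ContinuousLinearMap.sub_apply, hadF_apply]
    rw [← h1]
    ring
  -- `D1` kills `I` on the left
  have claim1 : ∀ x ∈ I, ∀ y ∈ I, D1 x y = 0 := by
    intro x hx y hy
    have h1 := congrArg (fun φ : ↥I →L[ℂ] ℂ => φ ⟨y, hy⟩) (hf ⟨x, hx⟩)
    simp only [ContinuousLinearMap.sub_apply, lAct_apply, rAct_apply, hDIapp,
      MulMemClass.mk_mul_mk] at h1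
    have h3 : F (y * x) = f ⟨y * x, mul_mem hy hx⟩ :=
      hF ⟨y * x, (NonUnitalSubalgebra.mem_toSubmodule I).2 (mul_mem hy hx)⟩
    have h4 : F (x * y) = f ⟨x * y, mul_mem hx hy⟩ :=
      hF ⟨x * y, (NonUnitalSubalgebra.mem_toSubmodule I).2 (mul_mem hx hy)⟩
    rw [hD1app, h1, h3, h4]
    ring
  -- `D1` vanishes on `I`
  have claim2 : ∀ x ∈ I, D1 x = 0 := by
    have hspan : Submodule.span ℂ {z : A | ∃ x ∈ I, ∃ y ∈ I, z = x * y}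
        ≤ LinearMap.ker ((D1 : A →L[ℂ] (A →L[ℂ] ℂ)) : A →ₗ[ℂ] (A →L[ℂ] ℂ)) := by
      rw [Submodule.span_le]
      rintro z ⟨x, hx, y, hy, rfl⟩
      refine LinearMap.mem_ker.2 ?_
      ext c
      have h1 := congrArg (fun φ : A →L[ℂ] ℂ => φ c) (hD1der x y)
      simp only [ContinuousLinearMap.add_apply, lAct_apply, rAct_apply] at h1
      simp only [ContinuousLinearMap.coe_coe, ContinuousLinearMap.zero_apply, h1,
        claim1 x hx (y * c) (hr c y hy), claim1 y hy (c * x) (hl c x hx), add_zero]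
    have hle : I.toSubmodule ≤ LinearMap.ker ((D1 : A →L[ℂ] (A →L[ℂ] ℂ)) : A →ₗ[ℂ] (A →L[ℂ] ℂ)) := by
      rw [← hI2]
      exact Submodule.topologicalClosure_minimal _ hspan (ContinuousLinearMap.isClosed_ker D1)
    intro x hx
    exact LinearMap.mem_ker.1 (hle hx)
  -- `D1 a` vanishes on `I` for every `a`
  have claim3 : ∀ (a : A), ∀ x ∈ I, D1 a x = 0 := by
    intro a x hx
    have h1 := hD1cyc a x
    have h2 : D1 x a = 0 := by rw [claim2 x hx]; rfl
    linear_combination h1 - h2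
  -- invariance of `D1` under translation by `I`
  have hmem : ∀ a a' : A, π a = π a' → a - a' ∈ I := by
    intro a a' h
    rw [← hker]
    rw [map_sub, h, sub_self]
  have h_inv1 : ∀ a a' : A, π a = π a' → D1 a = D1 a' := by
    intro a a' h
    have := claim2 _ (hmem a a' h)
    rw [map_sub] at this
    rwa [sub_eq_zero] at this
  have h_inv2 : ∀ (a b b' : A), π b = π b' → D1 a b = D1 a b' := by
    intro a b b' h
    have := claim3 a _ (hmem b b' h)
    rw [map_sub] at this
    rwa [sub_eq_zero] at this
  -- representatives
  set r : Q → A := fun q => (hsurj q).choose with hr_def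
  have hrπ : ∀ q : Q, π (r q) = q := fun q => (hsurj q).choose_spec
  -- quotient norm bound
  have hbound : ∀ (v C : ℝ) (q : Q), 0 ≤ C → (∀ b : A, π b = q → v ≤ C * ‖b‖) →
      v ≤ C * ‖q‖ := by
    intro v C q hC h
    rw [hnorm q]
    rcases eq_or_lt_of_le hC with hC0 | hCpos
    · have := h (r q) (hrπ q)
      rw [← hC0] at this ⊢
      simpa using this
    · have hS : (norm '' (π ⁻¹' {q})).Nonempty :=
        ⟨‖r q‖, ⟨r q, by simp [hrπ q], rfl⟩⟩
      have h2 : v / C ≤ sInf (norm '' (π ⁻¹' {q})) := by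
        refine le_csInf hS ?_
        rintro s ⟨b, hb, rfl⟩
        have hbq : π b = q := by simpa using hb
        rw [div_le_iff₀' hCpos]
        exact h b hbq
      calc v = C * (v / C) := by field_simp
        _ ≤ C * sInf (norm '' (π ⁻¹' {q})) := by
            exact mul_le_mul_of_nonneg_left h2 hC
  -- the functional `Ψ a` on `Q` induced by `D1 a`
  have hΨbound : ∀ (a : A) (q : Q), ‖D1 a (r q)‖ ≤ ‖D1 a‖ * ‖q‖ := by
    intro a q
    refine hbound _ _ q (norm_nonneg _) (fun b hb => ?_)
    rw [h_inv2 a (r q) b (by rw [hrπ q, hb])]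
    exact (D1 a).le_opNorm b
  set Ψ : A → (Q →L[ℂ] ℂ) := fun a => LinearMap.mkContinuous
    { toFun := fun q => D1 a (r q)
      map_add' := fun q p => by
        show D1 a (r (q + p)) = D1 a (r q) + D1 a (r p)
        rw [h_inv2 a (r (q + p)) (r q + r p) (by rw [map_add, hrπ, hrπ, hrπ]), map_add]
      map_smul' := fun c q => by
        show D1 a (r (c • q)) = (RingHom.id ℂ) c • D1 a (r q)
        rw [h_inv2 a (r (c • q)) (c • r q) (by rw [map_smul, hrπ, hrπ]), map_smul]
        rfl }
    ‖D1 a‖ (fun q => hΨbound a q) with hΨ_def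
  have hΨapp : ∀ (a : A) (q : Q), Ψ a q = D1 a (r q) := fun a q => rfl
  have hΨ : ∀ a b : A, Ψ a (π b) = D1 a b := fun a b => h_inv2 a (r (π b)) b (hrπ _)
  have hΨinv : ∀ a a' : A, π a = π a' → Ψ a = Ψ a' := by
    intro a a' h
    ext s
    show D1 a (r s) = D1 a' (r s)
    rw [h_inv1 a a' h]
  have hΨnorm : ∀ a : A, ‖Ψ a‖ ≤ ‖D1 a‖ := fun a =>
    LinearMap.mkContinuous_norm_le _ (norm_nonneg _) _
  -- the induced derivation `D2` on `Q`
  have hD2bound : ∀ q : Q, ‖Ψ (r q)‖ ≤ ‖D1‖ * ‖q‖ := by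
    intro q
    refine hbound _ _ q (ContinuousLinearMap.opNorm_nonneg D1) (fun b hb => ?_)
    rw [hΨinv (r q) b (by rw [hrπ q, hb])]
    exact (hΨnorm b).trans (D1.le_opNorm b)
  set D2 : Q →L[ℂ] (Q →L[ℂ] ℂ) := LinearMap.mkContinuous
    { toFun := fun q => Ψ (r q)
      map_add' := fun q p => by
        show Ψ (r (q + p)) = Ψ (r q) + Ψ (r p)
        rw [hΨinv (r (q + p)) (r q + r p) (by rw [map_add, hrπ, hrπ, hrπ])]
        ext s
        show D1 (r q + r p) (r s) = (Ψ (r q) + Ψ (r p)) s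
        rw [map_add]
        rfl
      map_smul' := fun c q => by
        show Ψ (r (c • q)) = (RingHom.id ℂ) c • Ψ (r q)
        rw [hΨinv (r (c • q)) (c • r q) (by rw [map_smul, hrπ, hrπ])]
        ext s
        show D1 (c • r q) (r s) = (c • Ψ (r q)) s
        rw [map_smul]
        rfl }
    ‖D1‖ hD2bound with hD2_def
  have hD2 : ∀ a b : A, D2 (π a) (π b) = D1 a b := by
    intro a b
    show Ψ (r (π a)) (π b) = D1 a b
    rw [hΨinv (r (π a)) a (hrπ _), hΨ a b]
  have hD2der : IsDerivation D2 := by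
    intro q p
    obtain ⟨a, rfl⟩ := hsurj q
    obtain ⟨b, rfl⟩ := hsurj p
    ext s
    obtain ⟨c, rfl⟩ := hsurj s
    have h1 := congrArg (fun φ : A →L[ℂ] ℂ => φ c) (hD1der a b)
    simp only [ContinuousLinearMap.add_apply, lAct_apply, rAct_apply] at h1
    simp only [ContinuousLinearMap.add_apply, lAct_apply, rAct_apply,
      ← hmul, hD2]
    rw [h1]
  have hD2cyc : IsCyclicDeriv D2 := by
    intro q p
    obtain ⟨a, rfl⟩ := hsurj q
    obtain ⟨b, rfl⟩ := hsurj p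
    rw [hD2, hD2]
    have h1 := hcyc a b
    simp only [hD1app]
    rw [← h1]
    ring
  obtain ⟨ι, l, g, hne, hg⟩ := hQ D2 hD2der hD2cyc
  -- transport the approximating net back to `A`
  refine ⟨A →L[ℂ] ℂ, Filter.map (fun i => F + (g i).comp π) l, id, hne.map _, ?_⟩
  intro a
  rw [tendsto_map'_iff]
  have key3 : D a = adF a + (D2 (π a)).comp π := by
    ext b
    simp only [ContinuousLinearMap.add_apply, ContinuousLinearMap.comp_apply, hD2, hD1app,
      hadF_apply]
    ring
  have hexp : ∀ i, (fun φ : A →L[ℂ] ℂ => lAct a φ - rAct φ a) ((fun i => F + (g i).comp π) i)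
      = adF a + (((ContinuousLinearMap.compL ℂ A Q ℂ).flip π)
          ((fun i => lAct (π a) (g i) - rAct (g i) (π a)) i)) := by
    intro i
    ext b
    show (F + (g i).comp π) (b * a) - (F + (g i).comp π) (a * b)
      = adF a b + ((lAct (π a) (g i) - rAct (g i) (π a)).comp π) b
    simp only [ContinuousLinearMap.add_apply, ContinuousLinearMap.comp_apply,
      ContinuousLinearMap.sub_apply, lAct_apply, rAct_apply, hadF_apply, ← hmul]
    ring
  rw [key3]
  have hT := ((((ContinuousLinearMap.compL ℂ A Q ℂ).flip π).continuous.tendsto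
    (D2 (π a))).comp (hg (π a))).const_add (adF a)
  have hTval : ((ContinuousLinearMap.compL ℂ A Q ℂ).flip π) (D2 (π a))
      = (D2 (π a)).comp π := rfl
  rw [hTval] at hT
  exact hT.congr (fun i => (hexp i).symm)
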